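/- Let Φ : ℝ^n ⇉ ℝ^m be a polyhedral sublinear mapping and 𝓛 ⊆ ℝ^m a linear subspace. If Φ is relatively surjective, then H(Φ|𝓛) = ‖Φ⁻¹|𝓛‖ = max{ ‖Π_{Im(Φ)∩𝓛}(v)‖* : v ∈ ℝ^m, u ∈ Φ*(v), ‖u‖* ≤ 1 } = 1 / min{ ‖u‖* : u ∈ Φ*(v), ‖Π_{Im(Φ)∩𝓛}(v)‖* = 1 }. -/

import Mathlib

/-!
STATEMENT 3 (Proposition on `‖Φ⁻¹|𝓛‖` for relatively surjective `Φ`):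
if the polyhedral sublinear mapping `Φ : ℝ^n ⇉ ℝ^m` is relatively surjective
(its image is the linear subspace `W`), then
`H(Φ|𝓛) = ‖Φ⁻¹|𝓛‖ = max{‖Π_{Im(Φ)∩𝓛}(v)‖* : u ∈ Φ*(v), ‖u‖* ≤ 1}`
`= 1 / min{‖u‖* : u ∈ Φ*(v), ‖Π_{Im(Φ)∩𝓛}(v)‖* = 1}`.
Here `ℝ^n, ℝ^m` are the Euclidean spaces with their inner products,
`‖·‖*` is the dual norm and `Π` the orthogonal projection.
-/

open Metric

noncomputable section

/-- The dual norm: `‖v‖* = max_{‖x‖ ≤ 1} ⟨v, x⟩`. -/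
def dualNormEu {d : ℕ} (v : EuclideanSpace ℝ (Fin d)) : ℝ :=
  sSup {t | ∃ x : EuclideanSpace ℝ (Fin d), ‖x‖ ≤ 1 ∧ t = (inner ℝ v x : ℝ)}

/-- The graph of a set-valued mapping. -/
def svGraphE {n m : ℕ} (Φ : EuclideanSpace ℝ (Fin n) → Set (EuclideanSpace ℝ (Fin m))) :
    Set (EuclideanSpace ℝ (Fin n) × EuclideanSpace ℝ (Fin m)) :=
  {p | p.2 ∈ Φ p.1}

/-- A polyhedral cone: an intersection of finitely many closed halfspaces through
the origin. -/
def IsPolyhedralCone {E : Type*} [AddCommGroup E] [Module ℝ E] (K : Set E) : Prop :=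
  ∃ (k : ℕ) (f : Fin k → (E →ₗ[ℝ] ℝ)), K = {x | ∀ i, 0 ≤ f i x}

/-- The tangent cone to `K` at `p`. -/
def tangConeAt {E : Type*} [AddCommGroup E] [Module ℝ E] (K : Set E) (p : E) : Set E :=
  {z | ∃ t : ℝ, 0 < t ∧ p + t • z ∈ K}

/-- The collection `𝓣(K)` of tangent cones of `K`. -/
def tangentCones {E : Type*} [AddCommGroup E] [Module ℝ E] (K : Set E) : Set (Set E) :=
  {T | ∃ p ∈ K, T = tangConeAt K p}

/-- The mapping with graph `T` is relatively surjective. -/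
def RelSurjGraph {n m : ℕ}
    (T : Set (EuclideanSpace ℝ (Fin n) × EuclideanSpace ℝ (Fin m))) : Prop :=
  ∃ W : Submodule ℝ (EuclideanSpace ℝ (Fin m)),
    {y | ∃ x, (x, y) ∈ T} = (W : Set (EuclideanSpace ℝ (Fin m)))

/-- `‖Φ_T⁻¹ | 𝓛‖`. -/
def nrmInvRes {n m : ℕ} (T : Set (EuclideanSpace ℝ (Fin n) × EuclideanSpace ℝ (Fin m)))
    (L : Submodule ℝ (EuclideanSpace ℝ (Fin m))) : ℝ :=
  sSup {t | ∃ y : EuclideanSpace ℝ (Fin m), (∃ x, (x, y) ∈ T) ∧ y ∈ L ∧ ‖y‖ ≤ 1 ∧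
    t = sInf {r | ∃ x : EuclideanSpace ℝ (Fin n), (x, y) ∈ T ∧ r = ‖x‖}}

/-- The Hoffman constant `H(Φ|𝓛) = max_{T ∈ S(Φ)} ‖Φ_T⁻¹|𝓛‖`. -/
def HoffSV {n m : ℕ} (Φ : EuclideanSpace ℝ (Fin n) → Set (EuclideanSpace ℝ (Fin m)))
    (L : Submodule ℝ (EuclideanSpace ℝ (Fin m))) : ℝ :=
  sSup {t | ∃ T ∈ tangentCones (svGraphE Φ), RelSurjGraph T ∧ t = nrmInvRes T L}

/-- The upper adjoint `Φ*`: `u ∈ Φ*(v) ↔ ⟨u,x⟩ ≤ ⟨v,y⟩ for all (x,y) ∈ graph Φ`. -/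
def upperAdjoint {n m : ℕ} (Φ : EuclideanSpace ℝ (Fin n) → Set (EuclideanSpace ℝ (Fin m)))
    (v : EuclideanSpace ℝ (Fin m)) : Set (EuclideanSpace ℝ (Fin n)) :=
  {u | ∀ x y, y ∈ Φ x → (inner ℝ u x : ℝ) ≤ (inner ℝ v y : ℝ)}

-- cone closure lemmas
lemma IsPolyhedralCone.zero_mem' {E : Type*} [AddCommGroup E] [Module ℝ E] {K : Set E}
    (hK : IsPolyhedralCone K) : (0 : E) ∈ K := by
  obtain ⟨k, f, rfl⟩ := hK
  intro i; simp

lemma IsPolyhedralCone.add_mem' {E : Type*} [AddCommGroup E] [Module ℝ E] {K : Set E}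
    (hK : IsPolyhedralCone K) {p q : E} (hp : p ∈ K) (hq : q ∈ K) : p + q ∈ K := by
  obtain ⟨k, f, rfl⟩ := hK
  intro i
  rw [map_add]
  have h1 := hp i; have h2 := hq i
  linarith

lemma IsPolyhedralCone.smul_mem' {E : Type*} [AddCommGroup E] [Module ℝ E] {K : Set E}
    (hK : IsPolyhedralCone K) {c : ℝ} (hc : 0 ≤ c) {p : E} (hp : p ∈ K) : c • p ∈ K := by
  obtain ⟨k, f, rfl⟩ := hK
  intro i
  rw [map_smul, smul_eq_mul]
  exact mul_nonneg hc (hp i)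

lemma IsPolyhedralCone.sum_mem' {E : Type*} [AddCommGroup E] [Module ℝ E] {K : Set E}
    (hK : IsPolyhedralCone K) {ι : Type*} (s : Finset ι) (g : ι → E)
    (hg : ∀ i ∈ s, g i ∈ K) : ∑ i ∈ s, g i ∈ K :=
  Finset.sum_induction g (· ∈ K) (fun _ _ ha hb => hK.add_mem' ha hb) hK.zero_mem' hg

lemma dualNormEu_eq_norm {d : ℕ} (v : EuclideanSpace ℝ (Fin d)) : dualNormEu v = ‖v‖ := by
  have hbdd : ∀ t ∈ {t | ∃ x : EuclideanSpace ℝ (Fin d), ‖x‖ ≤ 1 ∧ t = (inner ℝ v x : ℝ)}, t ≤ ‖v‖ := by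
    rintro t ⟨x, hx, rfl⟩
    calc (inner ℝ v x : ℝ) ≤ ‖v‖ * ‖x‖ := real_inner_le_norm v x
      _ ≤ ‖v‖ * 1 := mul_le_mul_of_nonneg_left hx (norm_nonneg v)
      _ = ‖v‖ := mul_one _
  apply le_antisymm (Real.sSup_le hbdd (norm_nonneg v))
  rcases eq_or_ne v 0 with rfl | hv
  · simp only [norm_zero]
    exact le_csSup ⟨‖(0 : EuclideanSpace ℝ (Fin d))‖, hbdd⟩
      ⟨0, by simp, by simp⟩
  · refine le_csSup ⟨‖v‖, hbdd⟩ ⟨‖v‖⁻¹ • v, ?_, ?_⟩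
    · rw [norm_smul, norm_inv, norm_norm, inv_mul_cancel₀ (norm_ne_zero_iff.mpr hv)]
    · rw [real_inner_smul_right, real_inner_self_eq_norm_sq]
      field_simp [pow_two]


def mnormAux {n m : ℕ} (Φ : EuclideanSpace ℝ (Fin n) → Set (EuclideanSpace ℝ (Fin m)))
    (y : EuclideanSpace ℝ (Fin m)) : ℝ :=
  sInf {r | ∃ x : EuclideanSpace ℝ (Fin n), (x, y) ∈ svGraphE Φ ∧ r = ‖x‖}

section MNorm

variable {n m : ℕ} {Φ : EuclideanSpace ℝ (Fin n) → Set (EuclideanSpace ℝ (Fin m))}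

lemma mnorm_bddBelow (y : EuclideanSpace ℝ (Fin m)) :
    BddBelow {r | ∃ x : EuclideanSpace ℝ (Fin n), (x, y) ∈ svGraphE Φ ∧ r = ‖x‖} :=
  ⟨0, by rintro r ⟨x, _, rfl⟩; exact norm_nonneg x⟩

lemma mnorm_nonneg (y : EuclideanSpace ℝ (Fin m)) : 0 ≤ mnormAux Φ y :=
  Real.sInf_nonneg (by rintro r ⟨x, _, rfl⟩; exact norm_nonneg x)

lemma mnorm_le {y : EuclideanSpace ℝ (Fin m)} {x : EuclideanSpace ℝ (Fin n)}
    (h : (x, y) ∈ svGraphE Φ) : mnormAux Φ y ≤ ‖x‖ :=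
  csInf_le (mnorm_bddBelow y) ⟨x, h, rfl⟩

lemma mnorm_exists_lt {y : EuclideanSpace ℝ (Fin m)}
    (hy : ∃ x, (x, y) ∈ svGraphE Φ) {ε : ℝ} (hε : 0 < ε) :
    ∃ x, (x, y) ∈ svGraphE Φ ∧ ‖x‖ < mnormAux Φ y + ε := by
  obtain ⟨x0, hx0⟩ := hy
  obtain ⟨r, ⟨x, hx, rfl⟩, hr⟩ :=
    Real.lt_sInf_add_pos (s := {r | ∃ x : EuclideanSpace ℝ (Fin n), (x, y) ∈ svGraphE Φ ∧ r = ‖x‖})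
      ⟨‖x0‖, x0, hx0, rfl⟩ hε
  exact ⟨x, hx, hr⟩

lemma mnorm_zero (hK : IsPolyhedralCone (svGraphE Φ)) : mnormAux Φ 0 = 0 := by
  have h0 : ((0, 0) : EuclideanSpace ℝ (Fin n) × EuclideanSpace ℝ (Fin m)) ∈ svGraphE Φ :=
    hK.zero_mem'
  have := mnorm_le h0
  simp only [norm_zero] at this
  exact le_antisymm this (mnorm_nonneg 0)

lemma mnorm_add (hK : IsPolyhedralCone (svGraphE Φ)) {y1 y2 : EuclideanSpace ℝ (Fin m)}
    (h1 : ∃ x, (x, y1) ∈ svGraphE Φ) (h2 : ∃ x, (x, y2) ∈ svGraphE Φ) :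
    mnormAux Φ (y1 + y2) ≤ mnormAux Φ y1 + mnormAux Φ y2 := by
  apply le_of_forall_pos_le_add
  intro ε hε
  obtain ⟨x1, hx1, hn1⟩ := mnorm_exists_lt h1 (half_pos hε)
  obtain ⟨x2, hx2, hn2⟩ := mnorm_exists_lt h2 (half_pos hε)
  have hsum : (x1 + x2, y1 + y2) ∈ svGraphE Φ := hK.add_mem' hx1 hx2
  calc mnormAux Φ (y1 + y2) ≤ ‖x1 + x2‖ := mnorm_le hsum
    _ ≤ ‖x1‖ + ‖x2‖ := norm_add_le _ _
    _ ≤ mnormAux Φ y1 + mnormAux Φ y2 + ε := by linarith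

lemma mnorm_smul_le (hK : IsPolyhedralCone (svGraphE Φ)) {y : EuclideanSpace ℝ (Fin m)}
    (hy : ∃ x, (x, y) ∈ svGraphE Φ) {c : ℝ} (hc : 0 < c) :
    mnormAux Φ (c • y) ≤ c * mnormAux Φ y := by
  apply le_of_forall_pos_le_add
  intro ε hε
  obtain ⟨x, hx, hn⟩ := mnorm_exists_lt hy (div_pos hε hc)
  have hsm : (c • x, c • y) ∈ svGraphE Φ := hK.smul_mem' hc.le hx
  calc mnormAux Φ (c • y) ≤ ‖c • x‖ := mnorm_le hsm
    _ = c * ‖x‖ := by rw [norm_smul, Real.norm_eq_abs, abs_of_pos hc]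
    _ ≤ c * (mnormAux Φ y + ε / c) := mul_le_mul_of_nonneg_left hn.le hc.le
    _ = c * mnormAux Φ y + ε := by field_simp

lemma mnorm_smul (hK : IsPolyhedralCone (svGraphE Φ)) {y : EuclideanSpace ℝ (Fin m)}
    (hy : ∃ x, (x, y) ∈ svGraphE Φ) {c : ℝ} (hc : 0 < c) :
    mnormAux Φ (c • y) = c * mnormAux Φ y := by
  refine le_antisymm (mnorm_smul_le hK hy hc) ?_
  have hy' : ∃ x, (x, c • y) ∈ svGraphE Φ := by
    obtain ⟨x, hx⟩ := hy
    exact ⟨c • x, hK.smul_mem' hc.le hx⟩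
  have h2 := mnorm_smul_le hK hy' (inv_pos.mpr hc)
  rw [smul_smul, inv_mul_cancel₀ hc.ne', one_smul] at h2
  have := mul_le_mul_of_nonneg_left h2 hc.le
  rw [← mul_assoc, mul_inv_cancel₀ hc.ne', one_mul] at this
  linarith

end MNorm

section Bound

variable {n m : ℕ} {Φ : EuclideanSpace ℝ (Fin n) → Set (EuclideanSpace ℝ (Fin m))}

lemma max_add_max_neg (a : ℝ) : max a 0 + max (-a) 0 = |a| := by
  rcases le_total a 0 with h | h
  · rw [max_eq_right h, max_eq_left (neg_nonneg.mpr h), abs_of_nonpos h, zero_add]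
  · rw [max_eq_left h, max_eq_right (neg_nonpos.mpr h), abs_of_nonneg h, add_zero]

lemma max_sub_max_neg (a : ℝ) : max a 0 - max (-a) 0 = a := by
  rcases le_total a 0 with h | h
  · rw [max_eq_right h, max_eq_left (neg_nonneg.mpr h)]; ring
  · rw [max_eq_left h, max_eq_right (neg_nonpos.mpr h)]; ring

lemma exists_bound (hK : IsPolyhedralCone (svGraphE Φ))
    (W : Submodule ℝ (EuclideanSpace ℝ (Fin m)))
    (hW : {y | ∃ x, y ∈ Φ x} = (W : Set (EuclideanSpace ℝ (Fin m)))) :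
    ∃ B : ℝ, 0 ≤ B ∧ ∀ y ∈ W, ∃ x, (x, y) ∈ svGraphE Φ ∧ ‖x‖ ≤ B * ‖y‖ := by
  classical
  have hmem : ∀ y : EuclideanSpace ℝ (Fin m), y ∈ W → ∃ x, (x, y) ∈ svGraphE Φ := by
    intro y hy
    have : y ∈ {y | ∃ x, y ∈ Φ x} := by rw [hW]; exact hy
    exact this
  set b := Module.finBasis ℝ W with hb
  choose xp hxp using fun i => hmem ((b i : EuclideanSpace ℝ (Fin m))) (b i).2
  choose xm hxm using fun i => hmem (-(b i : EuclideanSpace ℝ (Fin m))) (neg_mem (b i).2)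
  set C : Fin (Module.finrank ℝ W) → ℝ :=
    fun i => ‖LinearMap.toContinuousLinearMap (b.coord i)‖ with hC
  set M : Fin (Module.finrank ℝ W) → ℝ := fun i => max ‖xp i‖ ‖xm i‖ with hM
  have hM0 : ∀ i, 0 ≤ M i := fun i => by
    simp only [hM]; exact le_max_of_le_left (norm_nonneg (xp i))
  have hC0 : ∀ i, 0 ≤ C i := fun i => by
    simp only [hC]; exact norm_nonneg (LinearMap.toContinuousLinearMap (b.coord i))
  refine ⟨∑ i, C i * M i,
    Finset.sum_nonneg (fun i _ => mul_nonneg (hC0 i) (hM0 i)), ?_⟩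
  intro y hy
  set c : Fin (Module.finrank ℝ W) → ℝ := fun i => b.repr ⟨y, hy⟩ i with hc
  set P : Fin (Module.finrank ℝ W) →
      EuclideanSpace ℝ (Fin n) × EuclideanSpace ℝ (Fin m) :=
    fun i => (max (c i) 0) • (xp i, (b i : EuclideanSpace ℝ (Fin m)))
      + (max (-(c i)) 0) • (xm i, -(b i : EuclideanSpace ℝ (Fin m))) with hP
  have hPK : ∀ i, P i ∈ svGraphE Φ := fun i =>
    hK.add_mem' (hK.smul_mem' (le_max_right _ _) (hxp i))
      (hK.smul_mem' (le_max_right _ _) (hxm i))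
  have hSK : ∑ i, P i ∈ svGraphE Φ := hK.sum_mem' Finset.univ P (fun i _ => hPK i)
  have hsnd : (∑ i, P i).2 = y := by
    rw [Prod.snd_sum]
    have : ∀ i, (P i).2 = c i • (b i : EuclideanSpace ℝ (Fin m)) := by
      intro i
      simp only [hP, Prod.snd_add, Prod.smul_snd, smul_neg]
      rw [← sub_eq_add_neg, ← sub_smul, max_sub_max_neg]
    simp only [this]
    have := congrArg (Submodule.subtype W) (Module.Basis.sum_repr b ⟨y, hy⟩)
    simp only [map_sum, map_smul, Submodule.subtype_apply] at this; exact this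
  refine ⟨(∑ i, P i).1, ?_, ?_⟩
  · have : ((∑ i, P i).1, y) = ∑ i, P i := by
      rw [← hsnd]
    rw [this]; exact hSK
  · have hfst : (∑ i, P i).1 = ∑ i, (P i).1 := Prod.fst_sum
    rw [hfst]
    calc ‖∑ i, (P i).1‖ ≤ ∑ i, ‖(P i).1‖ := norm_sum_le _ _
      _ ≤ ∑ i, C i * M i * ‖y‖ := by
        apply Finset.sum_le_sum
        intro i _
        have h1 : ‖(P i).1‖ ≤ |c i| * M i := by
          simp only [hP, Prod.fst_add, Prod.smul_fst]
          calc ‖max (c i) 0 • xp i + max (-(c i)) 0 • xm i‖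
              ≤ ‖max (c i) 0 • xp i‖ + ‖max (-(c i)) 0 • xm i‖ := norm_add_le _ _
            _ = max (c i) 0 * ‖xp i‖ + max (-(c i)) 0 * ‖xm i‖ := by
                rw [norm_smul, norm_smul, Real.norm_eq_abs, Real.norm_eq_abs,
                  abs_of_nonneg (le_max_right _ _), abs_of_nonneg (le_max_right _ _)]
            _ ≤ max (c i) 0 * M i + max (-(c i)) 0 * M i := by
                have := le_max_right (c i) 0
                have := le_max_right (-(c i)) 0
                gcongr
                · exact le_max_left _ _
                · exact le_max_right _ _
            _ = |c i| * M i := by rw [← add_mul, max_add_max_neg]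
        have h2 : |c i| ≤ C i * ‖y‖ := by
          have hcoord : c i = (LinearMap.toContinuousLinearMap (b.coord i)) ⟨y, hy⟩ := by
            simp [hc, Module.Basis.coord_apply]
          have := ContinuousLinearMap.le_opNorm
            (LinearMap.toContinuousLinearMap (b.coord i)) (⟨y, hy⟩ : W)
          rw [← hcoord] at this
          simpa [Real.norm_eq_abs] using this
        calc ‖(P i).1‖ ≤ |c i| * M i := h1
          _ ≤ (C i * ‖y‖) * M i := mul_le_mul_of_nonneg_right h2 (hM0 i)
          _ = C i * M i * ‖y‖ := by ring
      _ = (∑ i, C i * M i) * ‖y‖ := (Finset.sum_mul _ _ _).symm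

end Bound

section DualPair

variable {n m : ℕ} {Φ : EuclideanSpace ℝ (Fin n) → Set (EuclideanSpace ℝ (Fin m))}

lemma exists_dual_pair (hK : IsPolyhedralCone (svGraphE Φ))
    (L W : Submodule ℝ (EuclideanSpace ℝ (Fin m)))
    (hW : {y | ∃ x, y ∈ Φ x} = (W : Set (EuclideanSpace ℝ (Fin m))))
    {z : EuclideanSpace ℝ (Fin m)} (hzW : z ∈ W) (hzL : z ∈ L) (hz1 : ‖z‖ ≤ 1) :
    ∃ u v, u ∈ upperAdjoint Φ v ∧ ‖u‖ ≤ 1 ∧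
      mnormAux Φ z ≤ ‖((Submodule.orthogonalProjection (W ⊓ L) v : EuclideanSpace ℝ (Fin m)))‖ := by
  classical
  have hmemW : ∀ y : EuclideanSpace ℝ (Fin m), y ∈ W → ∃ x, (x, y) ∈ svGraphE Φ := by
    intro y hy
    have : y ∈ {y | ∃ x, y ∈ Φ x} := by rw [hW]; exact hy
    exact this
  have hWof : ∀ {x : EuclideanSpace ℝ (Fin n)} {y : EuclideanSpace ℝ (Fin m)},
      (x, y) ∈ svGraphE Φ → y ∈ W := by
    intro x y h
    have : y ∈ {y | ∃ x, y ∈ Φ x} := ⟨x, h⟩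
    rwa [hW] at this
  rcases eq_or_ne z 0 with rfl | hz
  · refine ⟨0, 0, ?_, by simp, ?_⟩
    · intro x y _
      simp [inner_zero_left]
    · rw [mnorm_zero hK]
      exact norm_nonneg _
  -- the sublinear majorant N₁ = mnorm ∘ projection onto W
  set Pw : EuclideanSpace ℝ (Fin m) → EuclideanSpace ℝ (Fin m) :=
    fun w => (Submodule.orthogonalProjection W w : EuclideanSpace ℝ (Fin m)) with hPw
  have hPwlin : ∀ (a : ℝ) (w w' : EuclideanSpace ℝ (Fin m)),
      Pw (a • w) = a • Pw w ∧ Pw (w + w') = Pw w + Pw w' := by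
    intro a w w'
    constructor
    · simp [hPw]
    · simp [hPw]
  have hPwmem : ∀ w, Pw w ∈ W := fun w => (Submodule.orthogonalProjection W w).2
  set N1 : EuclideanSpace ℝ (Fin m) → ℝ := fun w => mnormAux Φ (Pw w) with hN1
  have hN1smul : ∀ c : ℝ, 0 < c → ∀ w, N1 (c • w) = c * N1 w := by
    intro c hc w
    simp only [hN1, (hPwlin c w w).1]
    exact mnorm_smul hK (hmemW _ (hPwmem w)) hc
  have hN1add : ∀ w w', N1 (w + w') ≤ N1 w + N1 w' := by
    intro w w'
    simp only [hN1, (hPwlin 1 w w').2]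
    exact mnorm_add hK (hmemW _ (hPwmem w)) (hmemW _ (hPwmem w'))
  -- Hahn-Banach step 1: functional g with g z = mnorm z, g ≤ N1
  have hzspan : z ∈ Submodule.span ℝ ({z} : Set (EuclideanSpace ℝ (Fin m))) :=
    Submodule.mem_span_singleton_self z
  set f : EuclideanSpace ℝ (Fin m) →ₗ.[ℝ] ℝ :=
    LinearPMap.mkSpanSingleton z (mnormAux Φ z) hz with hf
  have hfdom : f.domain = Submodule.span ℝ ({z} : Set (EuclideanSpace ℝ (Fin m))) := rfl
  have hfle : ∀ x : f.domain, f x ≤ N1 x := by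
    intro x
    have hx2 : (x : EuclideanSpace ℝ (Fin m)) ∈ Submodule.span ℝ ({z} : Set (EuclideanSpace ℝ (Fin m))) := by
      rw [← hfdom]; exact x.2
    obtain ⟨a, ha⟩ := Submodule.mem_span_singleton.mp hx2
    have hxa : x = a • (⟨z, hzspan⟩ : f.domain) := by
      apply Subtype.ext
      simp [ha.symm]
    rw [hxa, f.map_smul, LinearPMap.mkSpanSingleton_apply]
    have hcoe : ((a • (⟨z, hzspan⟩ : f.domain) : f.domain) : EuclideanSpace ℝ (Fin m))
        = a • z := rfl
    rw [hcoe]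
    have hPz : Pw (a • z) = a • z := by
      simp only [hPw]
      exact Submodule.starProjection_eq_self_iff.mpr (Submodule.smul_mem W a hzW)
    simp only [hN1, hPz, smul_eq_mul]
    rcases lt_trichotomy a 0 with hneg | hzero | hpos
    · calc a * mnormAux Φ z ≤ 0 := mul_nonpos_of_nonpos_of_nonneg hneg.le (mnorm_nonneg z)
        _ ≤ mnormAux Φ (a • z) := mnorm_nonneg _
    · simp [hzero, mnorm_zero hK]
    · rw [mnorm_smul hK (hmemW z hzW) hpos]
  obtain ⟨g, hgf, hgle⟩ := exists_extension_of_le_sublinear f N1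
    (fun c hc x => hN1smul c hc x) hN1add hfle
  have hgz : g z = mnormAux Φ z := by
    have := hgf ⟨z, hzspan⟩
    rw [this]
    exact LinearPMap.mkSpanSingleton_apply ℝ ℝ hz _
  have hgW : ∀ {y : EuclideanSpace ℝ (Fin m)}, y ∈ W → g y ≤ mnormAux Φ y := by
    intro y hy
    have := hgle y
    have hPy : Pw y = y := by
      simp only [hPw]
      exact Submodule.starProjection_eq_self_iff.mpr hy
    simpa only [hN1, hPy] using this
  -- the sublinear function N3 on the domain side
  set S3 : EuclideanSpace ℝ (Fin n) → Set ℝ :=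
    fun x => {r | ∃ x1 x2 y2, x = x1 + x2 ∧ (x2, y2) ∈ svGraphE Φ ∧ r = ‖x1‖ - g y2} with hS3
  have hS3ne : ∀ x, (S3 x).Nonempty := by
    intro x
    exact ⟨‖x‖, x, 0, 0, (add_zero x).symm, hK.zero_mem', by simp⟩
  have hgpair : ∀ {x2 : EuclideanSpace ℝ (Fin n)} {y2 : EuclideanSpace ℝ (Fin m)},
      (x2, y2) ∈ svGraphE Φ → g y2 ≤ ‖x2‖ := by
    intro x2 y2 h
    exact (hgW (hWof h)).trans (mnorm_le h)
  have hS3lb : ∀ x, ∀ r ∈ S3 x, -‖x‖ ≤ r := by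
    rintro x r ⟨x1, x2, y2, hx12, hK2, rfl⟩
    have h1 : g y2 ≤ ‖x2‖ := hgpair hK2
    have h2 : ‖x2‖ ≤ ‖x‖ + ‖x1‖ := by
      have : x2 = x - x1 := by rw [hx12]; abel
      rw [this]
      exact norm_sub_le x x1
    linarith
  have hS3bdd : ∀ x, BddBelow (S3 x) := fun x => ⟨-‖x‖, fun r hr => hS3lb x r hr⟩
  set N3 : EuclideanSpace ℝ (Fin n) → ℝ := fun x => sInf (S3 x) with hN3
  have hN3ge : ∀ x, -‖x‖ ≤ N3 x := fun x => le_csInf (hS3ne x) (hS3lb x)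
  have hN3le_norm : ∀ x, N3 x ≤ ‖x‖ := by
    intro x
    exact csInf_le (hS3bdd x) ⟨x, 0, 0, (add_zero x).symm, hK.zero_mem', by simp⟩
  have hN3pair : ∀ {x : EuclideanSpace ℝ (Fin n)} {y : EuclideanSpace ℝ (Fin m)},
      (x, y) ∈ svGraphE Φ → N3 x ≤ -(g y) := by
    intro x y h
    exact csInf_le (hS3bdd x) ⟨0, x, y, (zero_add x).symm, h, by simp⟩
  have hN3smul_le : ∀ c : ℝ, 0 < c → ∀ x, N3 (c • x) ≤ c * N3 x := by
    intro c hc x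
    have key : ∀ r ∈ S3 x, N3 (c • x) ≤ c * r := by
      rintro r ⟨x1, x2, y2, hx12, hK2, rfl⟩
      have hdec : c • x = c • x1 + c • x2 := by rw [hx12, smul_add]
      have hKc : (c • x2, c • y2) ∈ svGraphE Φ := hK.smul_mem' hc.le hK2
      have : c * (‖x1‖ - g y2) = ‖c • x1‖ - g (c • y2) := by
        rw [norm_smul, Real.norm_eq_abs, abs_of_pos hc, map_smul, smul_eq_mul]
        ring
      rw [this]
      exact csInf_le (hS3bdd _) ⟨c • x1, c • x2, c • y2, hdec, hKc, rfl⟩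
    have h1 : c⁻¹ * N3 (c • x) ≤ N3 x := by
      apply le_csInf (hS3ne x)
      intro r hr
      have := key r hr
      calc c⁻¹ * N3 (c • x) ≤ c⁻¹ * (c * r) :=
        mul_le_mul_of_nonneg_left this (inv_nonneg.mpr hc.le)
        _ = r := by field_simp
    have := mul_le_mul_of_nonneg_left h1 hc.le
    calc N3 (c • x) = c * (c⁻¹ * N3 (c • x)) := by field_simp
      _ ≤ c * N3 x := this
  have hN3smul : ∀ c : ℝ, 0 < c → ∀ x, N3 (c • x) = c * N3 x := by
    intro c hc x
    refine le_antisymm (hN3smul_le c hc x) ?_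
    have h2 := hN3smul_le c⁻¹ (inv_pos.mpr hc) (c • x)
    rw [smul_smul, inv_mul_cancel₀ hc.ne', one_smul] at h2
    have := mul_le_mul_of_nonneg_left h2 hc.le
    rw [← mul_assoc, mul_inv_cancel₀ hc.ne', one_mul] at this
    linarith
  have hN3add : ∀ x x', N3 (x + x') ≤ N3 x + N3 x' := by
    intro x x'
    apply le_of_forall_pos_le_add
    intro ε hε
    obtain ⟨r1, hr1mem, hr1⟩ := Real.lt_sInf_add_pos (hS3ne x) (half_pos hε)
    obtain ⟨r2, hr2mem, hr2⟩ := Real.lt_sInf_add_pos (hS3ne x') (half_pos hε)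
    obtain ⟨x1, x2, y2, hx12, hK2, rfl⟩ := hr1mem
    obtain ⟨x1', x2', y2', hx12', hK2', rfl⟩ := hr2mem
    have hdec : x + x' = (x1 + x1') + (x2 + x2') := by rw [hx12, hx12']; abel
    have hKc : (x2 + x2', y2 + y2') ∈ svGraphE Φ := hK.add_mem' hK2 hK2'
    have hval : N3 (x + x') ≤ ‖x1 + x1'‖ - g (y2 + y2') :=
      csInf_le (hS3bdd _) ⟨x1 + x1', x2 + x2', y2 + y2', hdec, hKc, rfl⟩
    have : ‖x1 + x1'‖ - g (y2 + y2') ≤ (‖x1‖ - g y2) + (‖x1'‖ - g y2') := by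
      rw [map_add]
      have := norm_add_le x1 x1'
      linarith
    have hN3x := hN3ge x  -- unused but harmless
    calc N3 (x + x') ≤ (‖x1‖ - g y2) + (‖x1'‖ - g y2') := hval.trans this
      _ ≤ N3 x + N3 x' + ε := by linarith
  -- Hahn-Banach step 2: functional h with h ≤ N3
  set f0 : EuclideanSpace ℝ (Fin n) →ₗ.[ℝ] ℝ := ⟨⊥, 0⟩ with hf0
  have hf0le : ∀ x : f0.domain, f0 x ≤ N3 x := by
    intro x
    have hx0 : (x : EuclideanSpace ℝ (Fin n)) = 0 := Submodule.mem_bot ℝ |>.mp x.2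
    have : f0 x = 0 := rfl
    rw [this, hx0]
    have := hN3ge 0
    simpa using this
  obtain ⟨h, _, hhle⟩ := exists_extension_of_le_sublinear f0 N3
    (fun c hc x => hN3smul c hc x) hN3add hf0le
  -- build the vectors u and v
  set u : EuclideanSpace ℝ (Fin n) :=
    (InnerProductSpace.toDual ℝ (EuclideanSpace ℝ (Fin n))).symm
      (LinearMap.toContinuousLinearMap h) with hu
  set v : EuclideanSpace ℝ (Fin m) :=
    -((InnerProductSpace.toDual ℝ (EuclideanSpace ℝ (Fin m))).symm
      (LinearMap.toContinuousLinearMap g)) with hv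
  have hinner_u : ∀ x, (inner ℝ u x : ℝ) = h x := by
    intro x
    rw [hu, InnerProductSpace.toDual_symm_apply]
    simp
  have hinner_v : ∀ y, (inner ℝ v y : ℝ) = -(g y) := by
    intro y
    rw [hv, inner_neg_left, InnerProductSpace.toDual_symm_apply]
    simp
  have hadj : u ∈ upperAdjoint Φ v := by
    intro x y hy
    rw [hinner_u, hinner_v]
    have hxy : (x, y) ∈ svGraphE Φ := hy
    exact (hhle x).trans (hN3pair hxy)
  have hu1 : ‖u‖ ≤ 1 := by
    have h1 : (inner ℝ u u : ℝ) ≤ ‖u‖ := by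
      rw [hinner_u]
      exact (hhle u).trans (hN3le_norm u)
    rw [real_inner_self_eq_norm_sq] at h1
    nlinarith [norm_nonneg u]
  refine ⟨u, v, hadj, hu1, ?_⟩
  -- value estimate
  set P : EuclideanSpace ℝ (Fin m) :=
    (Submodule.orthogonalProjection (W ⊓ L) v : EuclideanSpace ℝ (Fin m)) with hP
  have hwmem : -z ∈ W ⊓ L := neg_mem (Submodule.mem_inf.mpr ⟨hzW, hzL⟩)
  have hvw : (inner ℝ v (-z) : ℝ) = mnormAux Φ z := by
    rw [hinner_v, map_neg, hgz, neg_neg]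
  have hsplit : (inner ℝ v (-z) : ℝ) = (inner ℝ P (-z) : ℝ) := by
    have horth := Submodule.starProjection_inner_eq_zero v (-z) hwmem
    have : (inner ℝ (v - P) (-z) : ℝ) = 0 := horth
    rw [inner_sub_left] at this
    linarith
  have hCS : (inner ℝ P (-z) : ℝ) ≤ ‖P‖ := by
    calc (inner ℝ P (-z) : ℝ) ≤ ‖P‖ * ‖(-z : EuclideanSpace ℝ (Fin m))‖ := real_inner_le_norm _ _
      _ ≤ ‖P‖ * 1 := by
        rw [norm_neg]
        exact mul_le_mul_of_nonneg_left hz1 (norm_nonneg P)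
      _ = ‖P‖ := mul_one _
  rw [← hvw, hsplit]
  exact hCS

end DualPair

theorem hoffman_relSurj {n m : ℕ}
    (Φ : EuclideanSpace ℝ (Fin n) → Set (EuclideanSpace ℝ (Fin m)))
    (hK : IsPolyhedralCone (svGraphE Φ))
    (L W : Submodule ℝ (EuclideanSpace ℝ (Fin m)))
    (hW : {y | ∃ x, y ∈ Φ x} = (W : Set (EuclideanSpace ℝ (Fin m)))) :
    HoffSV Φ L = nrmInvRes (svGraphE Φ) L ∧
    HoffSV Φ L = sSup {t | ∃ v : EuclideanSpace ℝ (Fin m),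
        ∃ u ∈ upperAdjoint Φ v, dualNormEu u ≤ 1 ∧
          t = dualNormEu ((Submodule.orthogonalProjection (W ⊓ L) v :
            EuclideanSpace ℝ (Fin m)))} ∧
    HoffSV Φ L = 1 / sInf {t | ∃ v : EuclideanSpace ℝ (Fin m),
        ∃ u ∈ upperAdjoint Φ v,
          dualNormEu ((Submodule.orthogonalProjection (W ⊓ L) v :
            EuclideanSpace ℝ (Fin m))) = 1 ∧ t = dualNormEu u} := by
  classical
  have hIm : ∀ y : EuclideanSpace ℝ (Fin m), (∃ x, (x, y) ∈ svGraphE Φ) ↔ y ∈ W := by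
    intro y
    constructor
    · rintro ⟨x, hx⟩
      have : y ∈ {y | ∃ x, y ∈ Φ x} := ⟨x, hx⟩
      rwa [hW] at this
    · intro hy
      have : y ∈ {y | ∃ x, y ∈ Φ x} := by rw [hW]; exact hy
      exact this
  obtain ⟨B, hB0, hB⟩ := exists_bound hK W hW
  set SK := {t | ∃ y : EuclideanSpace ℝ (Fin m), (∃ x, (x, y) ∈ svGraphE Φ) ∧ y ∈ L ∧
    ‖y‖ ≤ 1 ∧ t = mnormAux Φ y} with hSK
  have hNrm : nrmInvRes (svGraphE Φ) L = sSup SK := rfl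
  have hSKub : ∀ t ∈ SK, t ≤ B := by
    rintro t ⟨y, hyK, hyL, hy1, rfl⟩
    obtain ⟨x, hx, hxb⟩ := hB y ((hIm y).mp hyK)
    calc mnormAux Φ y ≤ ‖x‖ := mnorm_le hx
      _ ≤ B * ‖y‖ := hxb
      _ ≤ B * 1 := mul_le_mul_of_nonneg_left hy1 hB0
      _ = B := mul_one B
  have hSKbdd : BddAbove SK := ⟨B, hSKub⟩
  have hSK0 : (0 : ℝ) ∈ SK :=
    ⟨0, (hIm 0).mpr W.zero_mem, L.zero_mem, by simp, (mnorm_zero hK).symm⟩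
  set N := nrmInvRes (svGraphE Φ) L with hNdef
  have hNsup : N = sSup SK := hNrm
  have hN0 : 0 ≤ N := by rw [hNsup]; exact le_csSup hSKbdd hSK0
  have hSKle : ∀ t ∈ SK, t ≤ N := fun t ht => hNsup ▸ le_csSup hSKbdd ht
  -- Claim 1
  have hTle : ∀ T ∈ tangentCones (svGraphE Φ), nrmInvRes T L ≤ N := by
    rintro T ⟨p, hp, rfl⟩
    have hsup : nrmInvRes (tangConeAt (svGraphE Φ) p) L =
        sSup {t | ∃ y : EuclideanSpace ℝ (Fin m),
          (∃ x, (x, y) ∈ tangConeAt (svGraphE Φ) p) ∧ y ∈ L ∧ ‖y‖ ≤ 1 ∧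
          t = sInf {r | ∃ x : EuclideanSpace ℝ (Fin n),
            (x, y) ∈ tangConeAt (svGraphE Φ) p ∧ r = ‖x‖}} := rfl
    rw [hsup]
    apply Real.sSup_le _ hN0
    rintro t ⟨y, ⟨x, hx⟩, hyL, hy1, rfl⟩
    obtain ⟨s, hs, hsx⟩ := hx
    have hq2 : p.2 + s • y ∈ W := by
      refine (hIm _).mp ⟨(p + s • (x, y)).1, ?_⟩
      exact hsx
    have hp2 : p.2 ∈ W := (hIm p.2).mp ⟨p.1, hp⟩
    have hsy : s • y ∈ W := by
      have := W.sub_mem hq2 hp2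
      simpa using this
    have hyW : y ∈ W := by
      have := W.smul_mem s⁻¹ hsy
      rwa [smul_smul, inv_mul_cancel₀ hs.ne', one_smul] at this
    have hsub : {r | ∃ x' : EuclideanSpace ℝ (Fin n), (x', y) ∈ svGraphE Φ ∧ r = ‖x'‖} ⊆
        {r | ∃ x' : EuclideanSpace ℝ (Fin n), (x', y) ∈ tangConeAt (svGraphE Φ) p ∧ r = ‖x'‖} := by
      rintro r ⟨x', hx', rfl⟩
      refine ⟨x', ⟨1, one_pos, ?_⟩, rfl⟩
      rw [one_smul]
      exact hK.add_mem' hp hx'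
    have hKne : {r | ∃ x' : EuclideanSpace ℝ (Fin n), (x', y) ∈ svGraphE Φ ∧ r = ‖x'‖}.Nonempty := by
      obtain ⟨x0, hx0⟩ := (hIm y).mpr hyW
      exact ⟨‖x0‖, x0, hx0, rfl⟩
    have hTbdd : BddBelow {r | ∃ x' : EuclideanSpace ℝ (Fin n),
        (x', y) ∈ tangConeAt (svGraphE Φ) p ∧ r = ‖x'‖} :=
      ⟨0, by rintro r ⟨x', _, rfl⟩; exact norm_nonneg x'⟩
    have h1 : sInf {r | ∃ x' : EuclideanSpace ℝ (Fin n),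
        (x', y) ∈ tangConeAt (svGraphE Φ) p ∧ r = ‖x'‖} ≤ mnormAux Φ y :=
      csInf_le_csInf hTbdd hKne hsub
    exact h1.trans (hSKle _ ⟨y, (hIm y).mpr hyW, hyL, hy1, rfl⟩)
  have htan0 : tangConeAt (svGraphE Φ) 0 = svGraphE Φ := by
    ext q
    constructor
    · rintro ⟨s, hs, hq⟩
      rw [zero_add] at hq
      have := hK.smul_mem' (inv_pos.mpr hs).le hq
      rwa [smul_smul, inv_mul_cancel₀ hs.ne', one_smul] at this
    · intro hq
      exact ⟨1, one_pos, by rw [zero_add, one_smul]; exact hq⟩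
  have hImK : {y | ∃ x, (x, y) ∈ svGraphE Φ} = (W : Set (EuclideanSpace ℝ (Fin m))) := by
    ext y
    simp only [Set.mem_setOf_eq, SetLike.mem_coe]
    exact hIm y
  have hHub : ∀ t ∈ {t | ∃ T ∈ tangentCones (svGraphE Φ), RelSurjGraph T ∧ t = nrmInvRes T L},
      t ≤ N := by
    rintro t ⟨T, hT, _, rfl⟩
    exact hTle T hT
  have hclaim1 : HoffSV Φ L = N := by
    apply le_antisymm
    · exact Real.sSup_le hHub hN0
    · exact le_csSup ⟨N, hHub⟩
        ⟨svGraphE Φ, ⟨0, hK.zero_mem', htan0.symm⟩, ⟨W, hImK⟩, rfl⟩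
  -- Claim 2
  set D := {t | ∃ v : EuclideanSpace ℝ (Fin m), ∃ u ∈ upperAdjoint Φ v, ‖u‖ ≤ 1 ∧
      t = ‖((Submodule.orthogonalProjection (W ⊓ L) v : EuclideanSpace ℝ (Fin m)))‖} with hD
  have hDle : ∀ t ∈ D, t ≤ N := by
    rw [hD]
    rintro t ⟨v, u, huv, hu1, rfl⟩
    set P := (Submodule.orthogonalProjection (W ⊓ L) v : EuclideanSpace ℝ (Fin m)) with hP
    rcases eq_or_ne P 0 with hP0 | hPne
    · rw [hP0, norm_zero]; exact hN0
    have hPpos : 0 < ‖P‖ := norm_pos_iff.mpr hPne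
    set y := ‖P‖⁻¹ • P with hy
    have hPmem : P ∈ W ⊓ L := SetLike.coe_mem _
    have hymem : y ∈ W ⊓ L := Submodule.smul_mem _ _ hPmem
    have hyW : y ∈ W := (Submodule.mem_inf.mp hymem).1
    have hyL : y ∈ L := (Submodule.mem_inf.mp hymem).2
    have hy1 : ‖y‖ = 1 := by
      rw [hy, norm_smul, norm_inv, norm_norm, inv_mul_cancel₀ hPpos.ne']
    have hvy : (inner ℝ v y : ℝ) = ‖P‖ := by
      have horth : (inner ℝ (v - P) P : ℝ) = 0 :=
        Submodule.starProjection_inner_eq_zero v P hPmem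
      rw [inner_sub_left] at horth
      have hvP : (inner ℝ v P : ℝ) = ‖P‖ ^ 2 := by
        rw [← real_inner_self_eq_norm_sq]; linarith
      rw [hy, real_inner_smul_right, hvP]
      field_simp [pow_two]
    apply le_of_forall_pos_le_add
    intro ε hε
    have hnymem : -y ∈ W := neg_mem hyW
    obtain ⟨x', hx', hxlt⟩ := mnorm_exists_lt ((hIm (-y)).mpr hnymem) hε
    have hmle : mnormAux Φ (-y) ≤ N :=
      hSKle _ ⟨-y, (hIm _).mpr hnymem, neg_mem hyL, by rw [norm_neg, hy1], rfl⟩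
    have hadj := huv x' (-y) hx'
    have hvny : (inner ℝ v (-y) : ℝ) = -‖P‖ := by rw [inner_neg_right, hvy]
    rw [hvny] at hadj
    have hcs : -(inner ℝ u x' : ℝ) ≤ ‖u‖ * ‖x'‖ := by
      have h1 := abs_real_inner_le_norm u x'
      have h2 := neg_abs_le (inner ℝ u x' : ℝ)
      linarith
    have hmul : ‖u‖ * ‖x'‖ ≤ 1 * (N + ε) := by
      apply mul_le_mul hu1 _ (norm_nonneg x') zero_le_one
      linarith
    linarith
  have hDbdd : BddAbove D := ⟨N, hDle⟩
  have hD0 : (0 : ℝ) ∈ D := by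
    rw [hD]
    refine ⟨0, 0, ?_, by simp, ?_⟩
    · intro x y _
      simp [inner_zero_left]
    · simp
  have hsupD0 : 0 ≤ sSup D := le_csSup hDbdd hD0
  have hclaim2 : HoffSV Φ L = sSup D := by
    rw [hclaim1]
    apply le_antisymm
    · rw [hNsup]
      apply Real.sSup_le _ hsupD0
      rintro s ⟨y, hyK, hyL, hy1, rfl⟩
      obtain ⟨u, v, huv, hu1, hval⟩ := exists_dual_pair hK L W hW ((hIm y).mp hyK) hyL hy1
      exact hval.trans (le_csSup hDbdd ⟨v, u, huv, hu1, rfl⟩)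
    · exact Real.sSup_le hDle hN0
  -- Claim 3
  set D3 := {t | ∃ v : EuclideanSpace ℝ (Fin m), ∃ u ∈ upperAdjoint Φ v,
      ‖((Submodule.orthogonalProjection (W ⊓ L) v : EuclideanSpace ℝ (Fin m)))‖ = 1 ∧ t = ‖u‖} with hD3
  have hPzero : ∀ v : EuclideanSpace ℝ (Fin m),
      (0 : EuclideanSpace ℝ (Fin n)) ∈ upperAdjoint Φ v →
      ‖((Submodule.orthogonalProjection (W ⊓ L) v : EuclideanSpace ℝ (Fin m)))‖ = 0 := by
    intro v hv
    set P := (Submodule.orthogonalProjection (W ⊓ L) v : EuclideanSpace ℝ (Fin m)) with hP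
    have hPmem : P ∈ W ⊓ L := SetLike.coe_mem _
    have hvge : ∀ y : EuclideanSpace ℝ (Fin m), y ∈ W → 0 ≤ (inner ℝ v y : ℝ) := by
      intro y hy
      obtain ⟨x, hx⟩ := (hIm y).mpr hy
      have := hv x y hx
      simpa [inner_zero_left] using this
    have h1 : 0 ≤ (inner ℝ v (-P) : ℝ) := hvge (-P) (neg_mem (Submodule.mem_inf.mp hPmem).1)
    rw [inner_neg_right] at h1
    have horth : (inner ℝ (v - P) P : ℝ) = 0 := Submodule.starProjection_inner_eq_zero v P hPmem
    rw [inner_sub_left] at horth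
    have h2 : (inner ℝ P P : ℝ) ≤ 0 := by linarith
    rw [real_inner_self_eq_norm_sq] at h2
    have h3 : ‖P‖ ≤ 0 := by nlinarith [norm_nonneg P]
    exact le_antisymm h3 (norm_nonneg P)
  have hscale : ∀ (u : EuclideanSpace ℝ (Fin n)) (v : EuclideanSpace ℝ (Fin m)) (c : ℝ),
      0 ≤ c → u ∈ upperAdjoint Φ v → c • u ∈ upperAdjoint Φ (c • v) := by
    intro u v c hc huv x y hy
    rw [real_inner_smul_left, real_inner_smul_left]
    exact mul_le_mul_of_nonneg_left (huv x y hy) hc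
  have hprojsmul : ∀ (c : ℝ) (v : EuclideanSpace ℝ (Fin m)),
      ((Submodule.orthogonalProjection (W ⊓ L) (c • v) : EuclideanSpace ℝ (Fin m)))
        = c • ((Submodule.orthogonalProjection (W ⊓ L) v : EuclideanSpace ℝ (Fin m))) := by
    intro c v
    rw [map_smul]
    rfl
  have hclaim3 : HoffSV Φ L = 1 / sInf D3 := by
    rw [hclaim1]
    by_cases hcase : D3 = ∅
    · rw [hcase, Real.sInf_empty, div_zero]
      refine le_antisymm ?_ hN0
      have hDzero : ∀ t ∈ D, t ≤ 0 := by
        rw [hD]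
        rintro t ⟨v, u, huv, hu1, rfl⟩
        by_contra hlt
        push_neg at hlt
        set P := (Submodule.orthogonalProjection (W ⊓ L) v : EuclideanSpace ℝ (Fin m)) with hP
        have hPpos : 0 < ‖P‖ := hlt
        have hmem3 : ‖‖P‖⁻¹ • u‖ ∈ D3 := by
          rw [hD3]
          refine ⟨‖P‖⁻¹ • v, ‖P‖⁻¹ • u,
            hscale u v _ (inv_nonneg.mpr (norm_nonneg P)) huv, ?_, rfl⟩
          rw [hprojsmul, norm_smul, norm_inv, norm_norm, inv_mul_cancel₀ hPpos.ne']
        rw [hcase] at hmem3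
        exact absurd hmem3 (Set.notMem_empty _)
      have hND : N = sSup D := hclaim1.symm.trans hclaim2
      rw [hND]
      exact Real.sSup_le hDzero le_rfl
    have hne : D3.Nonempty := Set.nonempty_iff_ne_empty.mpr hcase
    have hD3pos : ∀ r ∈ D3, 0 < r ∧ r⁻¹ ≤ N := by
      rw [hD3]
      rintro r ⟨v, u, huv, hP1, rfl⟩
      have hune : ‖u‖ ≠ 0 := by
        intro h0
        have hu0 : u = 0 := norm_eq_zero.mp h0
        rw [hu0] at huv
        have := hPzero v huv
        rw [this] at hP1
        exact zero_ne_one hP1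
      have hupos : 0 < ‖u‖ := lt_of_le_of_ne (norm_nonneg u) (Ne.symm hune)
      refine ⟨hupos, ?_⟩
      have hmem : ‖((Submodule.orthogonalProjection (W ⊓ L) (‖u‖⁻¹ • v) :
          EuclideanSpace ℝ (Fin m)))‖ ∈ D := by
        rw [hD]
        exact ⟨‖u‖⁻¹ • v, ‖u‖⁻¹ • u, hscale u v _ (inv_nonneg.mpr (norm_nonneg u)) huv,
          by rw [norm_smul, norm_inv, norm_norm, inv_mul_cancel₀ hune], rfl⟩
      have hval : ‖((Submodule.orthogonalProjection (W ⊓ L) (‖u‖⁻¹ • v) :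
          EuclideanSpace ℝ (Fin m)))‖ = ‖u‖⁻¹ := by
        rw [hprojsmul, norm_smul, norm_inv, norm_norm, hP1, mul_one]
      have hfin := le_csSup hDbdd hmem
      rw [hval] at hfin
      calc ‖u‖⁻¹ ≤ sSup D := hfin
        _ = N := (hclaim1.symm.trans hclaim2).symm
    obtain ⟨r0, hr0⟩ := id hne
    have hNpos : 0 < N := lt_of_lt_of_le (inv_pos.mpr (hD3pos r0 hr0).1) (hD3pos r0 hr0).2
    have hD3bddb : BddBelow D3 := by
      rw [hD3]
      exact ⟨0, by rintro r ⟨v, u, _, _, rfl⟩; exact norm_nonneg u⟩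
    have hI1 : N⁻¹ ≤ sInf D3 := by
      apply le_csInf hne
      intro r hr
      obtain ⟨hrpos, hrle⟩ := hD3pos r hr
      have := inv_anti₀ (inv_pos.mpr hrpos) hrle
      rwa [inv_inv] at this
    have hIpos : 0 < sInf D3 := lt_of_lt_of_le (inv_pos.mpr hNpos) hI1
    have hI2 : ∀ t ∈ D, t ≤ (sInf D3)⁻¹ := by
      rw [hD]
      rintro t ⟨v, u, huv, hu1, rfl⟩
      set P := (Submodule.orthogonalProjection (W ⊓ L) v : EuclideanSpace ℝ (Fin m)) with hP
      rcases eq_or_ne ‖P‖ 0 with hP0 | hPne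
      · rw [hP0]; exact (inv_pos.mpr hIpos).le
      have hPpos : 0 < ‖P‖ := lt_of_le_of_ne (norm_nonneg P) (Ne.symm hPne)
      have hmem3 : ‖‖P‖⁻¹ • u‖ ∈ D3 := by
        rw [hD3]
        exact ⟨‖P‖⁻¹ • v, ‖P‖⁻¹ • u, hscale u v _ (inv_nonneg.mpr (norm_nonneg P)) huv,
          by rw [hprojsmul, ← hP, norm_smul, norm_inv, norm_norm, inv_mul_cancel₀ hPne], rfl⟩
      have hle := csInf_le hD3bddb hmem3
      have hle2 : sInf D3 ≤ ‖P‖⁻¹ := by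
        rw [norm_smul, norm_inv, norm_norm] at hle
        calc sInf D3 ≤ ‖P‖⁻¹ * ‖u‖ := hle
          _ ≤ ‖P‖⁻¹ * 1 := mul_le_mul_of_nonneg_left hu1 (inv_nonneg.mpr (norm_nonneg P))
          _ = ‖P‖⁻¹ := mul_one _
      have hflip := inv_anti₀ hIpos hle2
      rwa [inv_inv] at hflip
    have hNle : N ≤ (sInf D3)⁻¹ := by
      have hND : N = sSup D := hclaim1.symm.trans hclaim2
      rw [hND]
      exact Real.sSup_le hI2 (inv_nonneg.mpr hIpos.le)
    have hIeq : sInf D3 = N⁻¹ := by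
      refine le_antisymm ?_ hI1
      have hflip := inv_anti₀ hNpos hNle
      rwa [inv_inv] at hflip
    rw [hIeq, one_div, inv_inv]
  exact ⟨hclaim1, by
      simp only [dualNormEu_eq_norm]
      rw [hclaim2, hD], by
      simp only [dualNormEu_eq_norm]
      rw [hclaim3, hD3]⟩

end
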